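/- Let K be a field and M a finite J-trivial monoid. Let Q(M) be the set of non-idempotent elements x ∈ M admitting no non-trivial factorization, i.e., such that for every factorization x = u·v one has lfix(x)·u = lfix(x) or v·rfix(x) = rfix(x). Let R denote the Jacobson radical of MonoidAlgebra K M and R² the ideal product R·R. Then the images of the elements x − x^ω, for x ∈ Q(M), form a K-basis of the quotient R/R²; in particular dim_K(R/R²) equals the cardinality of Q(M). -/

import Mathlib

/-- The `J`-preorder on a monoid: `x ≤_J y` iff `x = u * y * v` for some `u, v`. -/
def leJ {M : Type*} [Monoid M] (x y : M) : Prop := ∃ u v : M, x = u * y * v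

/-- A monoid is `J`-trivial if `M x M = M y M` implies `x = y`. -/
def JTrivial (M : Type*) [Monoid M] : Prop :=
  ∀ x y : M, {z : M | ∃ u v : M, z = u * x * v} = {z : M | ∃ u v : M, z = u * y * v} → x = y

open Classical

/-- `x ^ ω`: the unique idempotent among the positive powers of `x`
(in a finite `J`-trivial monoid it exists and is unique). -/
noncomputable def omegaPow {M : Type*} [Monoid M] (x : M) : M :=
  if h : ∃ e : M, IsIdempotentElem e ∧ ∃ n : ℕ, 0 < n ∧ e = x ^ n then h.choose else 1

/-- `lfix x`: the `≤_J`-minimum of the idempotents `e` with `e * x = x`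
(it exists in a finite `J`-trivial monoid). -/
noncomputable def lfixF {M : Type*} [Monoid M] (x : M) : M :=
  if h : ∃ e : M, (IsIdempotentElem e ∧ e * x = x) ∧
      ∀ f : M, IsIdempotentElem f → f * x = x → leJ e f
  then h.choose else 1

/-- `rfix x`: the `≤_J`-minimum of the idempotents `e` with `x * e = x`
(it exists in a finite `J`-trivial monoid). -/
noncomputable def rfixF {M : Type*} [Monoid M] (x : M) : M :=
  if h : ∃ e : M, (IsIdempotentElem e ∧ x * e = x) ∧
      ∀ f : M, IsIdempotentElem f → x * f = x → leJ e f
  then h.choose else 1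

/-- `Q(M)`: the set of non-idempotent elements admitting no non-trivial factorization. -/
def quiverSet (M : Type*) [Monoid M] : Set M :=
  {x : M | ¬ IsIdempotentElem x ∧ ∀ u v : M, x = u * v →
    lfixF x * u = lfixF x ∨ v * rfixF x = rfixF x}

section Part0
variable {M : Type*} [Monoid M]

theorem leJ_refl (x : M) : leJ x x := ⟨1, 1, by simp⟩

theorem leJ_trans {x y z : M} (h1 : leJ x y) (h2 : leJ y z) : leJ x z := by
  obtain ⟨u, v, rfl⟩ := h1; obtain ⟨s, t, rfl⟩ := h2
  exact ⟨u * s, t * v, by simp [mul_assoc]⟩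

theorem leJ_mul_left (a x : M) : leJ (a * x) x := ⟨a, 1, by simp⟩
theorem leJ_mul_right (x a : M) : leJ (x * a) x := ⟨1, a, by simp⟩

theorem JTrivial.antisymm {M : Type*} [Monoid M] (hJ : JTrivial M) {x y : M}
    (h1 : leJ x y) (h2 : leJ y x) : x = y := by
  apply hJ
  ext z
  constructor
  · rintro ⟨u, v, rfl⟩
    obtain ⟨s, t, rfl⟩ := h1
    exact ⟨u * s, t * v, by simp [mul_assoc]⟩
  · rintro ⟨u, v, rfl⟩
    obtain ⟨s, t, rfl⟩ := h2
    exact ⟨u * s, t * v, by simp [mul_assoc]⟩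

variable (hJ : JTrivial M)
include hJ

/-- if `x ≤ x*a` then `x*a = x`. -/
theorem absorb_right {x a : M} (h : leJ x (x * a)) : x * a = x :=
  hJ.antisymm (leJ_mul_right x a) h

theorem absorb_left {x a : M} (h : leJ x (a * x)) : a * x = x :=
  hJ.antisymm (leJ_mul_left a x) h

/-- `x * a^n = x` with `n ≥ 1` implies `x * a = x`. -/
theorem fix_right_of_pow {x a : M} {n : ℕ} (hn : 0 < n) (h : x * a ^ n = x) : x * a = x := by
  apply absorb_right hJ
  refine ⟨1, a ^ (n - 1), ?_⟩
  have : x * a * a ^ (n-1) = x * a ^ n := by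
    rw [mul_assoc, ← pow_succ']
    congr 2
    omega
  rw [one_mul, this, h]

theorem fix_left_of_pow {x a : M} {n : ℕ} (hn : 0 < n) (h : a ^ n * x = x) : a * x = x := by
  apply absorb_left hJ
  refine ⟨a ^ (n - 1), 1, ?_⟩
  have : a ^ (n-1) * (a * x) = a ^ n * x := by
    rw [← mul_assoc, ← pow_succ]
    congr 3
    omega
  rw [mul_one, this, h]

omit hJ in
theorem fix_right_pow {x a : M} (h : x * a = x) : ∀ n : ℕ, x * a ^ n = x := by
  intro n; induction n with
  | zero => simp
  | succ k ih => rw [pow_succ, ← mul_assoc, ih, h]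

omit hJ in
theorem fix_left_pow {x a : M} (h : a * x = x) : ∀ n : ℕ, a ^ n * x = x := by
  intro n; induction n with
  | zero => simp
  | succ k ih => rw [pow_succ', mul_assoc, ih, h]

variable [Fintype M]
include hJ

theorem exists_omega (x : M) : ∃ e : M, IsIdempotentElem e ∧ ∃ n : ℕ, 0 < n ∧ e = x ^ n := by
  obtain ⟨i, j, hij, hpow⟩ := Finite.exists_ne_map_eq_of_infinite (fun n : ℕ => x ^ (n + 1))
  wlog hlt : i < j generalizing i j
  · exact this j i hij.symm hpow.symm (by omega)
  -- x^(i+1) = x^(j+1) = x^(i+1) * x^(j-i)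
  have key : x ^ (i+1) * x ^ (j - i) = x ^ (i+1) := by
    rw [← pow_add]
    rw [hpow]; congr 1; omega
  have hx : x ^ (i+1) * x = x ^ (i+1) := fix_right_of_pow hJ (by omega) key
  refine ⟨x ^ (i+1), ?_, i+1, by omega, rfl⟩
  exact fix_right_pow hx (i+1)

theorem omegaPow_spec (x : M) :
    IsIdempotentElem (omegaPow x) ∧ ∃ n : ℕ, 0 < n ∧ omegaPow x = x ^ n := by
  rw [omegaPow, dif_pos (exists_omega hJ x)]
  exact (exists_omega hJ x).choose_spec

theorem omegaPow_idem (x : M) : IsIdempotentElem (omegaPow x) := (omegaPow_spec hJ x).1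

theorem omegaPow_eq_pow (x : M) : ∃ n : ℕ, 0 < n ∧ omegaPow x = x ^ n := (omegaPow_spec hJ x).2

/-- any positive idempotent power is THE omegaPow -/
theorem omega_unique {x e : M} (he : IsIdempotentElem e) {n : ℕ} (hn : 0 < n)
    (h : e = x ^ n) : omegaPow x = e := by
  obtain ⟨m, hm, hω⟩ := omegaPow_eq_pow hJ x
  have h1 : (omegaPow x) ^ n = omegaPow x := by
    have := (omegaPow_idem hJ x).pow_succ_eq (n-1)
    rwa [show n-1+1 = n by omega] at this
  have h2 : e ^ m = e := by
    have := he.pow_succ_eq (m-1)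
    rwa [show m-1+1 = m by omega] at this
  rw [← h1, hω, ← pow_mul, Nat.mul_comm, pow_mul, ← h, h2]

theorem omegaPow_of_idem {x : M} (hx : IsIdempotentElem x) : omegaPow x = x :=
  omega_unique hJ hx (n := 1) one_pos (pow_one x).symm

theorem leJ_omegaPow (x : M) : leJ (omegaPow x) x := by
  obtain ⟨n, hn, h⟩ := omegaPow_eq_pow hJ x
  exact ⟨x ^ (n-1), 1, by rw [h, mul_one, ← pow_succ]; congr 1; omega⟩

end Part0

section PartA
variable {M : Type*} [Monoid M]

theorem sandwich_pow (x y : M) : ∀ k : ℕ, x * (y * x) ^ k = (x * y) ^ k * x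
  | 0 => by simp
  | k+1 => by
    rw [pow_succ', pow_succ']
    simp only [← mul_assoc]
    rw [mul_assoc (x*y) x ((y*x)^k), sandwich_pow x y k, ← mul_assoc]

theorem prod_fix_left {x : M} : ∀ (l : List M), (∀ a ∈ l, a * x = x) → l.prod * x = x
  | [], _ => by simp
  | a :: t, h => by
    rw [List.prod_cons, mul_assoc, prod_fix_left t (fun b hb => h b (List.mem_cons_of_mem a hb)),
      h a List.mem_cons_self]

theorem prod_fix_right {x : M} : ∀ (l : List M), (∀ a ∈ l, x * a = x) → x * l.prod = x
  | [], _ => by simp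
  | a :: t, h => by
    rw [List.prod_cons, ← mul_assoc, h a List.mem_cons_self,
      prod_fix_right t (fun b hb => h b (List.mem_cons_of_mem a hb))]

variable [Fintype M] (hJ : JTrivial M)
include hJ

theorem omegaPow_mul_self (x : M) : omegaPow x * x = omegaPow x := by
  obtain ⟨n, hn, h⟩ := omegaPow_eq_pow hJ x
  refine fix_right_of_pow hJ hn ?_
  have hi := (omegaPow_idem hJ x).eq
  rw [h] at hi ⊢
  exact hi

theorem mul_omegaPow_self (x : M) : x * omegaPow x = omegaPow x := by
  obtain ⟨n, hn, h⟩ := omegaPow_eq_pow hJ x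
  refine fix_left_of_pow hJ hn ?_
  have hi := (omegaPow_idem hJ x).eq
  rw [h] at hi ⊢
  exact hi

/-- First half of L6: `ω(xy)·x = ω(xy)` and `ω(xy)·y = ω(xy)`. -/
theorem omega_absorb_right (x y : M) :
    omegaPow (x*y) * x = omegaPow (x*y) ∧ omegaPow (x*y) * y = omegaPow (x*y) := by
  obtain ⟨n, hn, he⟩ := omegaPow_eq_pow hJ (x*y)
  set e := omegaPow (x*y) with hedef
  have hee : e * e = e := (omegaPow_idem hJ (x*y)).eq
  have h1 : e * (x*y) ^ n = e := by rw [← he]; exact hee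
  have hexy : e * (x*y) = e := fix_right_of_pow hJ hn h1
  have hex : e * x = e := by
    apply absorb_right hJ
    refine ⟨1, y, ?_⟩
    rw [one_mul, mul_assoc, hexy]
  have hey : e * y = e := by
    conv_lhs => rw [← hex]
    rw [mul_assoc, hexy]
  exact ⟨hex, hey⟩

/-- Second half of L6: left absorption and symmetry of ω. -/
theorem omega_absorb_left (x y : M) :
    x * omegaPow (x*y) = omegaPow (x*y) ∧ y * omegaPow (x*y) = omegaPow (x*y) ∧
      omegaPow (x*y) = omegaPow (y*x) := by
  obtain ⟨n, hn, he⟩ := omegaPow_eq_pow hJ (x*y)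
  obtain ⟨m, hm, hf⟩ := omegaPow_eq_pow hJ (y*x)
  set e := omegaPow (x*y) with hedef
  set f := omegaPow (y*x) with hfdef
  have heK : e = (x*y) ^ (n*m) := by
    have h1 : (e : M) ^ m = e := by
      have := (omegaPow_idem hJ (x*y)).pow_succ_eq (m-1)
      rwa [show m-1+1 = m by omega] at this
    rw [pow_mul, ← he, h1]
  have hfK : f = (y*x) ^ (n*m) := by
    have h1 : (f : M) ^ n = f := by
      have := (omegaPow_idem hJ (y*x)).pow_succ_eq (n-1)
      rwa [show n-1+1 = n by omega] at this
    rw [Nat.mul_comm, pow_mul, ← hf, h1]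
  have hex : e * x = e := (omega_absorb_right hJ x y).1
  have hfy : f * y = f := (omega_absorb_right hJ y x).1
  have hfx : f * x = f := (omega_absorb_right hJ y x).2
  -- x * f = e
  have hxf : x * f = e := by
    rw [hfK, sandwich_pow, ← heK, hex]
  -- y * e = f
  have hye : y * e = f := by
    rw [heK, sandwich_pow, ← hfK, hfy]
  have hef : e * f = e := by
    conv_lhs => rw [← hex]
    rw [mul_assoc, hxf]
    exact (omegaPow_idem hJ (x*y)).eq
  have hfe : f * e = f := by
    conv_lhs => rw [← hfy]
    rw [mul_assoc, hye]
    exact (omegaPow_idem hJ (y*x)).eq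
  have heqf : e = f := by
    refine hJ.antisymm ⟨e, 1, ?_⟩ ⟨f, 1, ?_⟩
    · rw [mul_one]; exact hef.symm
    · rw [mul_one]; exact hfe.symm
  refine ⟨?_, ?_, heqf⟩
  · rw [heqf, hxf]; exact heqf
  · rw [hye]; exact heqf.symm

theorem omega_absorb_left₁ (x y : M) : x * omegaPow (x*y) = omegaPow (x*y) :=
  (omega_absorb_left hJ x y).1
theorem omega_absorb_left₂ (x y : M) : y * omegaPow (x*y) = omegaPow (x*y) :=
  (omega_absorb_left hJ x y).2.1

/-- the three ω-identities -/
theorem omega_mul_right (a b : M) : omegaPow (a*b) = omegaPow (a * omegaPow b) := by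
  obtain ⟨p, hp, hb⟩ := omegaPow_eq_pow hJ b
  obtain ⟨s, hs, hg⟩ := omegaPow_eq_pow hJ (a * omegaPow b)
  obtain ⟨t, ht, heq⟩ := omegaPow_eq_pow hJ (a*b)
  set e := omegaPow (a*b) with hedef
  set g := omegaPow (a * omegaPow b) with hgdef
  have hea : e * a = e := (omega_absorb_right hJ a b).1
  have heb : e * b = e := (omega_absorb_right hJ a b).2
  have h1 : e * (a * omegaPow b) = e := by
    rw [← mul_assoc, hea, hb, fix_right_pow heb]
  have heg : e * g = e := by
    rw [hg]; exact fix_right_pow h1 s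
  have hga : g * a = g := (omega_absorb_right hJ a (omegaPow b)).1
  have hgb : g * b = g := by
    refine fix_right_of_pow hJ hp ?_
    rw [← hb]; exact (omega_absorb_right hJ a (omegaPow b)).2
  have h2 : g * (a*b) = g := by rw [← mul_assoc, hga, hgb]
  have hge : g * e = g := by
    rw [heq]; exact fix_right_pow h2 t
  refine hJ.antisymm ⟨e, 1, ?_⟩ ⟨g, 1, ?_⟩
  · rw [mul_one]; exact heg.symm
  · rw [mul_one]; exact hge.symm

theorem omega_mul_left (a b : M) : omegaPow (a*b) = omegaPow (omegaPow a * b) := by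
  obtain ⟨p, hp, ha⟩ := omegaPow_eq_pow hJ a
  obtain ⟨s, hs, hg⟩ := omegaPow_eq_pow hJ (omegaPow a * b)
  obtain ⟨t, ht, heq⟩ := omegaPow_eq_pow hJ (a*b)
  set e := omegaPow (a*b) with hedef
  set g := omegaPow (omegaPow a * b) with hgdef
  have hea : e * a = e := (omega_absorb_right hJ a b).1
  have heb : e * b = e := (omega_absorb_right hJ a b).2
  have h1 : e * (omegaPow a * b) = e := by
    rw [← mul_assoc, ha, fix_right_pow hea, heb]
  have heg : e * g = e := by rw [hg]; exact fix_right_pow h1 s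
  have hgb : g * b = g := (omega_absorb_right hJ (omegaPow a) b).2
  have hga : g * a = g := by
    refine fix_right_of_pow hJ hp ?_
    rw [← ha]; exact (omega_absorb_right hJ (omegaPow a) b).1
  have h2 : g * (a*b) = g := by rw [← mul_assoc, hga, hgb]
  have hge : g * e = g := by rw [heq]; exact fix_right_pow h2 t
  refine hJ.antisymm ⟨e, 1, ?_⟩ ⟨g, 1, ?_⟩
  · rw [mul_one]; exact heg.symm
  · rw [mul_one]; exact hge.symm

theorem omega_mul_both (a b : M) : omegaPow (a*b) = omegaPow (omegaPow a * omegaPow b) := by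
  rw [omega_mul_left hJ a b, omega_mul_right hJ (omegaPow a) b]

theorem exists_lfix (x : M) : ∃ e : M, (IsIdempotentElem e ∧ e * x = x) ∧
    ∀ f : M, IsIdempotentElem f → f * x = x → leJ e f := by
  classical
  set l : List M := (Finset.univ.filter (fun e => IsIdempotentElem e ∧ e * x = x)).toList with hl
  have hmem : ∀ a, a ∈ l ↔ IsIdempotentElem a ∧ a * x = x := by
    intro a
    rw [hl, Finset.mem_toList, Finset.mem_filter]
    simp
  have hpx : l.prod * x = x := prod_fix_left l (fun a ha => ((hmem a).1 ha).2)
  obtain ⟨s, hs, hω⟩ := omegaPow_eq_pow hJ l.prod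
  refine ⟨omegaPow l.prod, ⟨omegaPow_idem hJ _, ?_⟩, ?_⟩
  · rw [hω]; exact fix_left_pow hpx s
  · intro f hf hfx
    have hfl : f ∈ l := (hmem f).2 ⟨hf, hfx⟩
    obtain ⟨u, v, huv⟩ := List.append_of_mem hfl
    obtain ⟨t, rfl⟩ : ∃ t, s = t + 1 := ⟨s - 1, by omega⟩
    refine ⟨(l.prod) ^ t * u.prod, v.prod, ?_⟩
    have h2 : l.prod = u.prod * (f * v.prod) := by
      rw [huv, List.prod_append, List.prod_cons]
    rw [hω, pow_succ, h2]
    simp only [mul_assoc]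

theorem exists_rfix (x : M) : ∃ e : M, (IsIdempotentElem e ∧ x * e = x) ∧
    ∀ f : M, IsIdempotentElem f → x * f = x → leJ e f := by
  classical
  set l : List M := (Finset.univ.filter (fun e => IsIdempotentElem e ∧ x * e = x)).toList with hl
  have hmem : ∀ a, a ∈ l ↔ IsIdempotentElem a ∧ x * a = x := by
    intro a
    rw [hl, Finset.mem_toList, Finset.mem_filter]
    simp
  have hpx : x * l.prod = x := prod_fix_right l (fun a ha => ((hmem a).1 ha).2)
  obtain ⟨s, hs, hω⟩ := omegaPow_eq_pow hJ l.prod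
  refine ⟨omegaPow l.prod, ⟨omegaPow_idem hJ _, ?_⟩, ?_⟩
  · rw [hω]; exact fix_right_pow hpx s
  · intro f hf hfx
    have hfl : f ∈ l := (hmem f).2 ⟨hf, hfx⟩
    obtain ⟨u, v, huv⟩ := List.append_of_mem hfl
    obtain ⟨t, rfl⟩ : ∃ t, s = t + 1 := ⟨s - 1, by omega⟩
    refine ⟨(l.prod) ^ t * u.prod, v.prod, ?_⟩
    have h2 : l.prod = u.prod * (f * v.prod) := by
      rw [huv, List.prod_append, List.prod_cons]
    rw [hω, pow_succ, h2]
    simp only [mul_assoc]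

theorem lfixF_spec (x : M) : (IsIdempotentElem (lfixF x) ∧ lfixF x * x = x) ∧
    ∀ f : M, IsIdempotentElem f → f * x = x → leJ (lfixF x) f := by
  rw [lfixF, dif_pos (exists_lfix hJ x)]
  exact (exists_lfix hJ x).choose_spec

theorem rfixF_spec (x : M) : (IsIdempotentElem (rfixF x) ∧ x * rfixF x = x) ∧
    ∀ f : M, IsIdempotentElem f → x * f = x → leJ (rfixF x) f := by
  rw [rfixF, dif_pos (exists_rfix hJ x)]
  exact (exists_rfix hJ x).choose_spec

theorem lfixF_idem (x : M) : IsIdempotentElem (lfixF x) := (lfixF_spec hJ x).1.1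
theorem lfixF_fix (x : M) : lfixF x * x = x := (lfixF_spec hJ x).1.2
theorem rfixF_idem (x : M) : IsIdempotentElem (rfixF x) := (rfixF_spec hJ x).1.1
theorem rfixF_fix (x : M) : x * rfixF x = x := (rfixF_spec hJ x).1.2

/-- L7 : if `e` is idempotent and `e*x = x` then `lfix x` absorbs `e` on both sides. -/
theorem lfix_absorb {x e : M} (he : IsIdempotentElem e) (hex : e * x = x) :
    lfixF x * e = lfixF x ∧ e * lfixF x = lfixF x := by
  set lx := lfixF x with hldef
  have hlx : lx * x = x := lfixF_fix hJ x
  obtain ⟨s, hs, hg⟩ := omegaPow_eq_pow hJ (lx * e)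
  set g := omegaPow (lx * e) with hgdef
  have h1 : (lx * e) * x = x := by rw [mul_assoc, hex, hlx]
  have hgx : g * x = x := by rw [hg]; exact fix_left_pow h1 s
  have hlg : leJ lx g := (lfixF_spec hJ x).2 g (omegaPow_idem hJ _) hgx
  obtain ⟨t, rfl⟩ : ∃ t, s = t + 1 := ⟨s - 1, by omega⟩
  have hgl : leJ g lx := by
    refine ⟨1, (e*lx) ^ t * e, ?_⟩
    rw [one_mul, hg, pow_succ, ← mul_assoc, ← sandwich_pow, mul_assoc]
  have hgeq : g = lx := hJ.antisymm hgl hlg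
  constructor
  · have := (omega_absorb_right hJ lx e).2
    rwa [← hgdef, hgeq] at this
  · have := omega_absorb_left₂ hJ lx e
    rwa [← hgdef, hgeq] at this

theorem rfix_absorb {x e : M} (he : IsIdempotentElem e) (hxe : x * e = x) :
    rfixF x * e = rfixF x ∧ e * rfixF x = rfixF x := by
  set rx := rfixF x with hrdef
  have hrx : x * rx = x := rfixF_fix hJ x
  obtain ⟨s, hs, hg⟩ := omegaPow_eq_pow hJ (e * rx)
  set g := omegaPow (e * rx) with hgdef
  have h1 : x * (e * rx) = x := by rw [← mul_assoc, hxe, hrx]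
  have hgx : x * g = x := by rw [hg]; exact fix_right_pow h1 s
  have hrg : leJ rx g := (rfixF_spec hJ x).2 g (omegaPow_idem hJ _) hgx
  obtain ⟨t, rfl⟩ : ∃ t, s = t + 1 := ⟨s - 1, by omega⟩
  have hgr : leJ g rx := by
    refine ⟨e * (rx*e) ^ t, 1, ?_⟩
    rw [mul_one, hg, pow_succ, ← mul_assoc, ← sandwich_pow]
  have hgeq : g = rx := hJ.antisymm hgr hrg
  constructor
  · have := (omega_absorb_right hJ e rx).1
    rwa [← hgdef, hgeq] at this
  · have := omega_absorb_left₁ hJ e rx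
    rwa [← hgdef, hgeq] at this

end PartA

section PartB
variable {M : Type*} [Monoid M] [Fintype M] (hJ : JTrivial M)
include hJ

theorem fix_right_omega_iff {l a : M} : l * omegaPow a = l ↔ l * a = l := by
  obtain ⟨n, hn, h⟩ := omegaPow_eq_pow hJ a
  constructor
  · intro hh; exact fix_right_of_pow hJ hn (by rw [← h]; exact hh)
  · intro hh; rw [h]; exact fix_right_pow hh n

theorem fix_left_omega_iff {r b : M} : omegaPow b * r = r ↔ b * r = r := by
  obtain ⟨n, hn, h⟩ := omegaPow_eq_pow hJ b
  constructor
  · intro hh; exact fix_left_of_pow hJ hn (by rw [← h]; exact hh)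
  · intro hh; rw [h]; exact fix_left_pow hh n

/-- The key cancellation: for `q ∈ Q(M)` the four statements
`l(ab)r = q`, `l(aω(b))r = q`, `l(ω(a)b)r = q`, `l(ω(a)ω(b))r = q` pair up into
equivalent pairs (rows or columns). -/
theorem key_cancel {q : M} (hq : q ∈ quiverSet M) (a b : M) :
    ((lfixF q * (a * b) * rfixF q = q ↔ lfixF q * (omegaPow a * b) * rfixF q = q) ∧
     (lfixF q * (a * omegaPow b) * rfixF q = q ↔
        lfixF q * (omegaPow a * omegaPow b) * rfixF q = q)) ∨
    ((lfixF q * (a * b) * rfixF q = q ↔ lfixF q * (a * omegaPow b) * rfixF q = q) ∧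
     (lfixF q * (omegaPow a * b) * rfixF q = q ↔
        lfixF q * (omegaPow a * omegaPow b) * rfixF q = q)) := by
  obtain ⟨hqni, hqf⟩ := hq
  set l := lfixF q with hldef
  set r := rfixF q with hrdef
  have hll : l * l = l := lfixF_idem hJ q
  have hrr : r * r = r := rfixF_idem hJ q
  by_cases hal : l * a = l
  · left
    have hωa : l * omegaPow a = l := (fix_right_omega_iff hJ).2 hal
    have e13 : l * (a * b) = l * (omegaPow a * b) := by
      rw [← mul_assoc, ← mul_assoc, hal, hωa]
    have e24 : l * (a * omegaPow b) = l * (omegaPow a * omegaPow b) := by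
      rw [← mul_assoc, ← mul_assoc, hal, hωa]
    exact ⟨by rw [e13], by rw [e24]⟩
  by_cases hbr : b * r = r
  · right
    have hωb : omegaPow b * r = r := (fix_left_omega_iff hJ).2 hbr
    have e12 : l * (a * b) * r = l * (a * omegaPow b) * r := by
      rw [mul_assoc l, mul_assoc l, mul_assoc a, mul_assoc a, hbr, hωb]
    have e34 : l * (omegaPow a * b) * r = l * (omegaPow a * omegaPow b) * r := by
      rw [mul_assoc l, mul_assoc l, mul_assoc (omegaPow a), mul_assoc (omegaPow a), hbr, hωb]
    exact ⟨by rw [e12], by rw [e34]⟩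
  -- both fail: all four are false
  · left
    have hA1 : ¬ (l * (a * b) * r = q) := by
      intro h
      rcases hqf (l * a) (b * r) (by rw [← h]; simp only [mul_assoc]) with h' | h'
      · rw [← mul_assoc, hll] at h'
        exact hal h'
      · rw [mul_assoc, hrr] at h'
        exact hbr h'
    have hA2 : ¬ (l * (a * omegaPow b) * r = q) := by
      intro h
      obtain ⟨n, hn, hωb⟩ := omegaPow_eq_pow hJ b
      obtain ⟨t, rfl⟩ : ∃ t, n = t + 1 := ⟨n - 1, by omega⟩
      rcases hqf (l * (a * b ^ t)) (b * r) (by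
        rw [← h, hωb, pow_succ]
        simp only [mul_assoc]) with h' | h'
      · rw [← mul_assoc, hll] at h'
        apply hal
        refine hJ.antisymm (leJ_mul_right l a) ⟨1, b ^ t, ?_⟩
        rw [one_mul, mul_assoc]
        exact h'.symm
      · rw [mul_assoc, hrr] at h'
        exact hbr h'
    have hA3 : ¬ (l * (omegaPow a * b) * r = q) := by
      intro h
      obtain ⟨n, hn, hωa⟩ := omegaPow_eq_pow hJ a
      obtain ⟨t, rfl⟩ : ∃ t, n = t + 1 := ⟨n - 1, by omega⟩
      rcases hqf (l * a) (a ^ t * (b * r)) (by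
        rw [← h, hωa, pow_succ']
        simp only [mul_assoc]) with h' | h'
      · rw [← mul_assoc, hll] at h'
        exact hal h'
      · rw [mul_assoc, mul_assoc, hrr, ← mul_assoc] at h'
        apply hbr
        refine hJ.antisymm (leJ_mul_left b r) ⟨a ^ t, 1, ?_⟩
        rw [mul_one, ← mul_assoc]
        exact h'.symm
    have hA4 : ¬ (l * (omegaPow a * omegaPow b) * r = q) := by
      intro h
      rcases hqf (l * omegaPow a) (omegaPow b * r) (by
        rw [← h]; simp only [mul_assoc]) with h' | h'
      · rw [← mul_assoc, hll] at h'
        exact hal ((fix_right_omega_iff hJ).1 h')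
      · rw [mul_assoc, hrr] at h'
        exact hbr ((fix_left_omega_iff hJ).1 h')
    exact ⟨iff_of_false hA1 hA3, iff_of_false hA2 hA4⟩

/-- a non-idempotent, non-quiver element has a factorization whose three
ω-variants are strictly `J`-below it. -/
theorem not_quiver_factor {x : M} (hx : ¬ IsIdempotentElem x) (hxq : x ∉ quiverSet M) :
    ∃ u v : M, x = u * v ∧
      (leJ (u * omegaPow v) x ∧ u * omegaPow v ≠ x) ∧
      (leJ (omegaPow u * v) x ∧ omegaPow u * v ≠ x) ∧
      (leJ (omegaPow u * omegaPow v) x ∧ omegaPow u * omegaPow v ≠ x) := by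
  have h0 : ¬ (∀ u v : M, x = u * v →
      lfixF x * u = lfixF x ∨ v * rfixF x = rfixF x) := fun h => hxq ⟨hx, h⟩
  push_neg at h0
  obtain ⟨u, v, huv, hul, hvr⟩ := h0
  obtain ⟨n, hn, hωv⟩ := omegaPow_eq_pow hJ v
  obtain ⟨t, rfl⟩ : ∃ t, n = t + 1 := ⟨n - 1, by omega⟩
  obtain ⟨m, hm, hωu⟩ := omegaPow_eq_pow hJ u
  obtain ⟨s, rfl⟩ : ∃ s, m = s + 1 := ⟨m - 1, by omega⟩
  refine ⟨u, v, huv, ⟨⟨1, v ^ t, ?_⟩, ?_⟩, ⟨⟨u ^ s, 1, ?_⟩, ?_⟩, ⟨⟨u ^ s, v ^ t, ?_⟩, ?_⟩⟩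
  · rw [one_mul, hωv, pow_succ', huv]
    simp only [mul_assoc]
  · intro h
    have hxv : x * omegaPow v = x := by
      conv_lhs => rw [← h]
      rw [mul_assoc, (omegaPow_idem hJ v).eq, h]
    exact hvr ((fix_left_omega_iff hJ).1 (rfix_absorb hJ (omegaPow_idem hJ v) hxv).2)
  · rw [mul_one, hωu, pow_succ, huv]
    simp only [mul_assoc]
  · intro h
    have hux : omegaPow u * x = x := by
      conv_lhs => rw [← h]
      rw [← mul_assoc, (omegaPow_idem hJ u).eq, h]
    exact hul ((fix_right_omega_iff hJ).1 (lfix_absorb hJ (omegaPow_idem hJ u) hux).1)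
  · rw [hωu, hωv, pow_succ, pow_succ', huv]
    simp only [mul_assoc]
  · intro h
    have hux : omegaPow u * x = x := by
      conv_lhs => rw [← h]
      rw [← mul_assoc, (omegaPow_idem hJ u).eq, h]
    exact hul ((fix_right_omega_iff hJ).1 (lfix_absorb hJ (omegaPow_idem hJ u) hux).1)

omit hJ in
/-- size function: a strictly monotone ℕ-valued height for `≤_J`. -/
noncomputable def jHeight (x : M) : ℕ := (Finset.univ.filter (fun z => leJ z x)).card

omit hJ in
theorem jHeight_mono {x y : M} (h : leJ x y) : jHeight x ≤ jHeight y := by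
  apply Finset.card_le_card
  intro z hz
  rw [Finset.mem_filter] at hz ⊢
  exact ⟨hz.1, leJ_trans hz.2 h⟩

theorem jHeight_strict {x y : M} (h : leJ x y) (hne : x ≠ y) : jHeight x < jHeight y := by
  apply Finset.card_lt_card
  rw [Finset.ssubset_iff_of_subset]
  · refine ⟨y, ?_, ?_⟩
    · rw [Finset.mem_filter]; exact ⟨Finset.mem_univ y, leJ_refl y⟩
    · rw [Finset.mem_filter]
      rintro ⟨-, hyx⟩
      exact hne (hJ.antisymm h hyx)
  · intro z hz
    rw [Finset.mem_filter] at hz ⊢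
    exact ⟨hz.1, leJ_trans hz.2 h⟩

end PartB

section PartC
open Submodule
variable (K : Type*) [Field K] {M : Type*} [Monoid M] [Fintype M]

noncomputable def diffElt (x : M) : MonoidAlgebra K M :=
  MonoidAlgebra.of K M x - MonoidAlgebra.of K M (omegaPow x)

noncomputable def NK : Submodule K (MonoidAlgebra K M) :=
  Submodule.span K (Set.range (fun x : M => diffElt K x))

theorem diffElt_mem_NK (x : M) : diffElt K x ∈ NK K :=
  Submodule.subset_span ⟨x, rfl⟩

theorem diff_mul_diff (a b : M) : diffElt K a * diffElt K b =
    MonoidAlgebra.of K M (a * b) - MonoidAlgebra.of K M (a * omegaPow b)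
      - MonoidAlgebra.of K M (omegaPow a * b)
      + MonoidAlgebra.of K M (omegaPow a * omegaPow b) := by
  simp only [diffElt, sub_mul, mul_sub, ← map_mul]
  abel

theorem diff_idem (hJ : JTrivial M) {x : M} (hx : IsIdempotentElem x) : diffElt K x = 0 := by
  rw [diffElt, omegaPow_of_idem hJ hx, sub_self]

noncomputable def psiF (q : M) : MonoidAlgebra K M →ₗ[K] K where
  toFun z := ∑ y ∈ Finset.univ.filter (fun y => lfixF q * y * rfixF q = q), z.coeff y
  map_add' z w := by
    rw [← Finset.sum_add_distrib]
    rfl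
  map_smul' c z := by
    simp only [RingHom.id_apply, smul_eq_mul]
    rw [Finset.mul_sum]
    rfl

theorem psiF_of (q x : M) :
    psiF K q (MonoidAlgebra.of K M x) = if lfixF q * x * rfixF q = q then 1 else 0 := by
  classical
  simp only [psiF, LinearMap.coe_mk, AddHom.coe_mk, MonoidAlgebra.of_apply]
  rw [show (∑ y ∈ Finset.univ.filter (fun y => lfixF q * y * rfixF q = q),
        (MonoidAlgebra.single x (1:K)).coeff y)
      = ∑ y ∈ Finset.univ.filter (fun y => lfixF q * y * rfixF q = q),
        (if x = y then (1:K) else 0) from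
    Finset.sum_congr rfl (fun y _ => Finsupp.single_apply)]
  rw [Finset.sum_ite_eq]
  simp [Finset.mem_filter]

theorem psiF_vanish (hJ : JTrivial M) {q : M} (hq : q ∈ quiverSet M) (a b : M) :
    psiF K q (diffElt K a * diffElt K b) = 0 := by
  rw [diff_mul_diff]
  simp only [map_sub, map_add, psiF_of]
  rcases key_cancel hJ hq a b with ⟨h1, h2⟩ | ⟨h1, h2⟩
  · rw [if_congr h1 rfl rfl, if_congr h2 rfl rfl]; ring
  · rw [if_congr h1 rfl rfl, if_congr h2 rfl rfl]; ring

theorem psiF_diff (q x : M) : psiF K q (diffElt K x) =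
    (if lfixF q * x * rfixF q = q then (1:K) else 0)
      - (if lfixF q * omegaPow x * rfixF q = q then (1:K) else 0) := by
  rw [diffElt, map_sub, psiF_of, psiF_of]

theorem of_mul_diff (hJ : JTrivial M) (m x : M) : MonoidAlgebra.of K M m * diffElt K x =
    diffElt K (m * x) - diffElt K (m * omegaPow x) := by
  simp only [diffElt, mul_sub, ← map_mul]
  rw [← omega_mul_right hJ m x]
  abel

theorem NK_mul_closed (hJ : JTrivial M) (a : MonoidAlgebra K M) {z : MonoidAlgebra K M} (hz : z ∈ NK K) :
    a * z ∈ NK K := by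
  induction a using MonoidAlgebra.induction_on with
  | of m =>
    refine Submodule.span_induction ?_ ?_ ?_ ?_ hz
    · rintro _ ⟨x, rfl⟩
      dsimp only
      rw [of_mul_diff K hJ]
      exact sub_mem (diffElt_mem_NK K _) (diffElt_mem_NK K _)
    · rw [mul_zero]; exact zero_mem _
    · intro u v _ _ hu hv
      rw [mul_add]; exact add_mem hu hv
    · intro c u _ hu
      rw [mul_smul_comm]; exact smul_mem _ c hu
  | add f g hf hg => rw [add_mul]; exact add_mem hf hg
  | smul c f hf => rw [smul_mul_assoc]; exact smul_mem _ c hf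

noncomputable def NA (hJ : JTrivial M) : Ideal (MonoidAlgebra K M) where
  carrier := NK K (M := M)
  add_mem' := fun h1 h2 => add_mem h1 h2
  zero_mem' := zero_mem _
  smul_mem' := fun a z hz => by
    rw [smul_eq_mul]
    exact NK_mul_closed K hJ a hz

theorem mem_NA (hJ : JTrivial M) {z : MonoidAlgebra K M} : z ∈ NA K hJ ↔ z ∈ NK K := Iff.rfl

noncomputable def chiHom (hJ : JTrivial M) (e : M) : M →* K where
  toFun x := if e * x = e then 1 else 0
  map_one' := by simp
  map_mul' x y := by
    by_cases hx : e * x = e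
    · rw [if_pos hx, one_mul, show e * (x * y) = e * y by rw [← mul_assoc, hx]]
    · rw [if_neg hx, zero_mul, if_neg]
      intro h
      exact hx (hJ.antisymm (leJ_mul_right e x)
        ⟨1, y, by rw [one_mul, mul_assoc]; exact h.symm⟩)

noncomputable def chiAlg (hJ : JTrivial M) (e : M) : MonoidAlgebra K M →ₐ[K] K :=
  MonoidAlgebra.lift K K M (chiHom K hJ e)

theorem chiAlg_of (hJ : JTrivial M) (e x : M) : chiAlg K hJ e (MonoidAlgebra.of K M x)
    = if e * x = e then 1 else 0 := by
  rw [chiAlg, MonoidAlgebra.lift_of]; rfl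

theorem NK_le_ker_chi (hJ : JTrivial M) (e : M) {z : MonoidAlgebra K M} (hz : z ∈ NK K) :
    chiAlg K hJ e z = 0 := by
  refine Submodule.span_induction ?_ ?_ ?_ ?_ hz
  · rintro _ ⟨x, rfl⟩
    dsimp only
    rw [diffElt, map_sub, chiAlg_of, chiAlg_of,
      if_congr (fix_right_omega_iff hJ) rfl rfl, sub_self]
  · exact map_zero _
  · intro u v _ _ hu hv; rw [map_add, hu, hv, add_zero]
  · intro c u _ hu; rw [map_smul, hu, smul_zero]

theorem ker_chi_isMaximal (hJ : JTrivial M) (e : M) :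
    (RingHom.ker (chiAlg K hJ e).toRingHom).IsMaximal := by
  rw [Ideal.isMaximal_def]
  constructor
  · rw [Ne, Ideal.eq_top_iff_one, RingHom.mem_ker]
    simp
  · intro I hI
    obtain ⟨x, hxI, hxk⟩ := SetLike.exists_of_lt hI
    rw [RingHom.mem_ker] at hxk
    rw [Ideal.eq_top_iff_one]
    have h1 : (1 : MonoidAlgebra K M)
        - algebraMap K (MonoidAlgebra K M) ((chiAlg K hJ e x)⁻¹) * x
        ∈ RingHom.ker (chiAlg K hJ e).toRingHom := by
      rw [RingHom.mem_ker]
      have : (chiAlg K hJ e).toRingHom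
          ((1 : MonoidAlgebra K M)
            - algebraMap K (MonoidAlgebra K M) ((chiAlg K hJ e x)⁻¹) * x)
          = 1 - (chiAlg K hJ e x)⁻¹ * chiAlg K hJ e x := by
        rw [map_sub, map_one, map_mul]
        congr 1
        congr 1
        exact (chiAlg K hJ e).commutes _
      have hxk' : (chiAlg K hJ e) x ≠ 0 := hxk
      rw [this, inv_mul_cancel₀ hxk', sub_self]
    have h2 := I.add_mem (le_of_lt hI h1)
      (I.mul_mem_left (algebraMap K (MonoidAlgebra K M) ((chiAlg K hJ e x)⁻¹)) hxI)
    simpa using h2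

end PartC

section PartD
open Submodule
variable (K : Type*) [Field K] {M : Type*} [Monoid M] [Fintype M]

noncomputable def Vk (k : ℕ) : Submodule K (MonoidAlgebra K M) :=
  Submodule.span K ((fun y : M => MonoidAlgebra.of K M y) '' {y : M | jHeight y ≤ k})

theorem jHeight_pos (y : M) : 0 < jHeight y :=
  Finset.card_pos.2 ⟨y, Finset.mem_filter.2 ⟨Finset.mem_univ y, leJ_refl y⟩⟩

theorem Vk_zero : Vk K (M := M) 0 = ⊥ := by
  have h : {y : M | jHeight y ≤ 0} = ∅ :=
    Set.eq_empty_iff_forall_notMem.2 (fun y hy => by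
      have := jHeight_pos y; simp only [Set.mem_setOf_eq] at hy; omega)
  rw [Vk, h, Set.image_empty, Submodule.span_empty]

theorem mem_Vk_top (z : MonoidAlgebra K M) : z ∈ Vk K (M := M) (Fintype.card M) := by
  induction z using MonoidAlgebra.induction_on with
  | of g =>
    refine Submodule.subset_span ⟨g, ?_, rfl⟩
    simp only [Set.mem_setOf_eq, jHeight]
    exact le_trans (Finset.card_filter_le _ _) (by simp)
  | add f g hf hg => exact add_mem hf hg
  | smul c f hf => exact smul_mem _ c hf

theorem NK_mul_Vk (hJ : JTrivial M) (k : ℕ) :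
    NK K * Vk K (M := M) (k+1) ≤ Vk K k := by
  rw [NK, Vk, Submodule.span_mul_span, Submodule.span_le]
  rintro _ ⟨_, ⟨x, rfl⟩, _, ⟨y, hy, rfl⟩, rfl⟩
  dsimp only
  simp only [Set.mem_setOf_eq] at hy
  have hexp : diffElt K x * MonoidAlgebra.of K M y
      = MonoidAlgebra.of K M (x * y) - MonoidAlgebra.of K M (omegaPow x * y) := by
    simp only [diffElt, sub_mul, ← map_mul]
  by_cases hxy : x * y = y
  · have h2 : omegaPow x * y = y := by
      obtain ⟨n, hn, hω⟩ := omegaPow_eq_pow hJ x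
      rw [hω]; exact fix_left_pow hxy n
    rw [SetLike.mem_coe, hexp, hxy, h2, sub_self]
    exact zero_mem _
  · have h1 : jHeight (x * y) ≤ k := by
      have := jHeight_strict hJ (leJ_mul_left x y) hxy
      omega
    have h2 : jHeight (omegaPow x * y) ≤ k := by
      obtain ⟨n, hn, hω⟩ := omegaPow_eq_pow hJ x
      obtain ⟨t, rfl⟩ : ∃ t, n = t + 1 := ⟨n - 1, by omega⟩
      refine le_trans (jHeight_mono ⟨x ^ t, 1, ?_⟩) h1
      rw [mul_one, hω, pow_succ', mul_assoc, ← mul_assoc, ← mul_assoc, ← pow_succ', ← pow_succ]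
    rw [SetLike.mem_coe, hexp]
    exact sub_mem (Submodule.subset_span ⟨x*y, h1, rfl⟩)
      (Submodule.subset_span ⟨omegaPow x * y, h2, rfl⟩)

theorem NK_pow_le (hJ : JTrivial M) :
    ∀ j, j ≤ Fintype.card M → NK K (M := M) ^ (j+1) ≤ Vk K (Fintype.card M - j) := by
  intro j
  induction j with
  | zero =>
    intro _
    rw [pow_one, Nat.sub_zero]
    exact fun z _ => mem_Vk_top K z
  | succ j ih =>
    intro hj
    rw [pow_succ']
    refine le_trans (Submodule.mul_le.2 fun a ha b hb => Submodule.mul_mem_mul ha (ih (by omega) hb)) ?_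
    have h : Fintype.card M - j = (Fintype.card M - (j+1)) + 1 := by omega
    rw [h]
    exact NK_mul_Vk K hJ _

theorem NK_nilpotent (hJ : JTrivial M) :
    NK K (M := M) ^ (Fintype.card M + 1) = ⊥ := by
  apply le_bot_iff.1
  have := NK_pow_le K hJ (Fintype.card M) le_rfl
  rwa [Nat.sub_self, Vk_zero K] at this

theorem NA_le_jacobson (hJ : JTrivial M) :
    NA K hJ ≤ Ideal.jacobson (⊥ : Ideal (MonoidAlgebra K M)) := by
  refine le_sInf ?_
  rintro m ⟨-, hm⟩
  by_contra hns
  rw [Ideal.isMaximal_def] at hm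
  have hlt : m < m ⊔ NA K hJ := left_lt_sup.2 hns
  have htop : m ⊔ NA K hJ = ⊤ := hm.2 _ hlt
  have hone : (1 : MonoidAlgebra K M) ∈ m ⊔ NA K hJ := by
    rw [htop]; exact Submodule.mem_top
  obtain ⟨y, hy, z, hz, hyz⟩ := Submodule.mem_sup.1 hone
  have hznil : IsNilpotent z := by
    refine ⟨Fintype.card M + 1, ?_⟩
    have h2 := Submodule.pow_mem_pow (NK K (M := M))
      (show z ∈ NK K (M := M) from hz) (Fintype.card M + 1)
    rwa [NK_nilpotent K hJ, Submodule.mem_bot] at h2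
  have hyu : IsUnit y := by
    have h3 : y = 1 - z := eq_sub_of_add_eq hyz
    rw [h3]
    exact hznil.isUnit_one_sub
  exact hm.1 (m.eq_top_of_isUnit_mem hy hyu)

noncomputable def omap (z : MonoidAlgebra K M) : MonoidAlgebra K M :=
  MonoidAlgebra.mapDomain omegaPow z

theorem omap_zero : omap K (0 : MonoidAlgebra K M) = 0 := by
  rw [omap]; exact MonoidAlgebra.mapDomain_zero _

theorem omap_add (z w : MonoidAlgebra K M) : omap K (z + w) = omap K z + omap K w := by
  rw [omap, omap, omap]; exact MonoidAlgebra.mapDomain_add _ _ _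

theorem omap_single (a : M) (b : K) :
    omap K (MonoidAlgebra.single a b) = MonoidAlgebra.single (omegaPow a) b := by
  rw [omap]; exact MonoidAlgebra.mapDomain_single

theorem omap_support [DecidableEq M] (z : MonoidAlgebra K M) :
    (omap K z).coeff.support ⊆ z.coeff.support.image omegaPow := by
  rw [omap]; exact Finsupp.mapDomain_support

theorem sub_mapDomain_mem_NK (z : MonoidAlgebra K M) :
    z - omap K z ∈ NK K := by
  induction z using MonoidAlgebra.induction with
  | zero => rw [omap_zero, sub_zero]; exact zero_mem _
  | single_add a b f haf hb ih =>
    rw [omap_add, omap_single, add_sub_add_comm]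
    refine add_mem ?_ ih
    have hsd : MonoidAlgebra.single a b - MonoidAlgebra.single (omegaPow a) b
        = b • diffElt K a := by
      simp only [diffElt, MonoidAlgebra.of_apply, smul_sub]
      rw [MonoidAlgebra.smul_single', MonoidAlgebra.smul_single', mul_one]
    rw [hsd]
    exact Submodule.smul_mem _ b (diffElt_mem_NK K a)

theorem mem_NK_of_chi (hJ : JTrivial M) {z : MonoidAlgebra K M}
    (hchi : ∀ e : M, IsIdempotentElem e → chiAlg K hJ e z = 0) : z ∈ NK K := by
  classical
  set w : MonoidAlgebra K M := omap K z with hw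
  have h1 : z - w ∈ NK K := sub_mapDomain_mem_NK K z
  have hws : ∀ x ∈ w.coeff.support, IsIdempotentElem x := by
    intro x hx
    obtain ⟨y, -, rfl⟩ := Finset.mem_image.1 (omap_support K z hx)
    exact omegaPow_idem hJ y
  have hwchi : ∀ e : M, IsIdempotentElem e → chiAlg K hJ e w = 0 := by
    intro e he
    have h2 : chiAlg K hJ e (z - w) = 0 := NK_le_ker_chi K hJ e h1
    rw [map_sub, hchi e he, zero_sub, neg_eq_zero] at h2
    exact h2
  have hwz : w = 0 := by
    by_contra hne
    have hsupp : w.coeff.support.Nonempty :=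
        Finsupp.support_nonempty_iff.2 (by rwa [Ne, MonoidAlgebra.coeff_eq_zero])
    obtain ⟨f, hf, hmax⟩ := Finset.exists_max_image w.coeff.support jHeight hsupp
    have hfe : IsIdempotentElem f := hws f hf
    have hchif := hwchi f hfe
    rw [chiAlg, MonoidAlgebra.lift_apply, Finsupp.sum, Finset.sum_eq_single f] at hchif
    · have hchiff : chiHom K hJ f f = 1 := by
        simp only [chiHom, MonoidHom.coe_mk, OneHom.coe_mk, if_pos hfe.eq]
      rw [hchiff, smul_eq_mul, mul_one] at hchif
      exact (Finsupp.mem_support_iff.1 hf) hchif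
    · intro b hb hbf
      have hz : chiHom K hJ f b = 0 := by
        simp only [chiHom, MonoidHom.coe_mk, OneHom.coe_mk]
        rw [if_neg]
        intro hfb
        have hle : leJ f b := ⟨f, 1, by rw [mul_one]; exact hfb.symm⟩
        have := jHeight_strict hJ hle (fun h => hbf (h.symm))
        have := hmax b hb
        omega
      rw [hz, smul_zero]
    · intro hfn
      exact absurd hf hfn
  have h3 : z = z - w := by rw [hwz, sub_zero]
  rw [h3]
  exact h1

theorem jacobson_le_NA (hJ : JTrivial M) :
    Ideal.jacobson (⊥ : Ideal (MonoidAlgebra K M)) ≤ NA K hJ := by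
  intro z hzj
  rw [mem_NA]
  apply mem_NK_of_chi K hJ
  intro e he
  have hk : Ideal.jacobson (⊥ : Ideal (MonoidAlgebra K M))
      ≤ RingHom.ker (chiAlg K hJ e).toRingHom :=
    sInf_le ⟨bot_le, ker_chi_isMaximal K hJ e⟩
  exact (RingHom.mem_ker).1 (hk hzj)

theorem restrict_jacobson (hJ : JTrivial M) :
    Submodule.restrictScalars K (Ideal.jacobson (⊥ : Ideal (MonoidAlgebra K M))) = NK K := by
  have h : Ideal.jacobson (⊥ : Ideal (MonoidAlgebra K M)) = NA K hJ :=
    le_antisymm (jacobson_le_NA K hJ) (NA_le_jacobson K hJ)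
  ext z
  rw [Submodule.restrictScalars_mem, h]
  exact Iff.rfl

end PartD

section PartE
open Submodule
variable (K : Type*) [Field K] {M : Type*} [Monoid M] [Fintype M]

theorem psiF_vanish_R2 (hJ : JTrivial M) {q : M} (hq : q ∈ quiverSet M)
    {z : MonoidAlgebra K M} (hz : z ∈ NK K (M := M) * NK K (M := M)) : psiF K q z = 0 := by
  rw [NK, Submodule.span_mul_span] at hz
  refine Submodule.span_induction ?_ ?_ ?_ ?_ hz
  · rintro _ ⟨_, ⟨a, rfl⟩, _, ⟨b, rfl⟩, rfl⟩
    dsimp only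
    exact psiF_vanish K hJ hq a b
  · exact map_zero _
  · intro u v _ _ hu hv; rw [map_add, hu, hv, add_zero]
  · intro c u _ hu; rw [map_smul, hu, smul_zero]

theorem main_indep (hJ : JTrivial M) : LinearIndependent K
    (fun x : (quiverSet M : Set M) => (NK K (M := M) * NK K (M := M)).mkQ (diffElt K (x : M))) := by
  classical
  rw [linearIndependent_iff']
  intro s g hsum
  by_contra hex
  push_neg at hex
  obtain ⟨i0, hi0s, hi0⟩ := hex
  set t := s.filter (fun i => g i ≠ 0) with ht
  have htne : t.Nonempty := ⟨i0, Finset.mem_filter.2 ⟨hi0s, hi0⟩⟩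
  obtain ⟨q, hqt, hqmax⟩ := Finset.exists_max_image t (fun i => jHeight (i : M)) htne
  have hgq : g q ≠ 0 := (Finset.mem_filter.1 hqt).2
  have hqs : q ∈ s := (Finset.mem_filter.1 hqt).1
  have hqQ : (q : M) ∈ quiverSet M := q.2
  have hmem : (∑ i ∈ s, g i • diffElt K (i : M)) ∈ NK K (M := M) * NK K (M := M) := by
    rw [← Submodule.Quotient.mk_eq_zero, ← Submodule.mkQ_apply, map_sum]
    simpa using hsum
  have h0 := psiF_vanish_R2 K hJ hqQ hmem
  rw [map_sum] at h0
  have hterm : ∀ i ∈ s, psiF K (q : M) (g i • diffElt K (i : M))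
      = if i = q then g i else 0 := by
    intro i his
    rw [map_smul, psiF_diff]
    by_cases hgi : g i = 0
    · rw [hgi, zero_smul, if_neg]
      intro hiq
      exact hgq (hiq ▸ hgi)
    · have hit : i ∈ t := Finset.mem_filter.2 ⟨his, hgi⟩
      have hjle : jHeight (i : M) ≤ jHeight (q : M) := hqmax i hit
      have hcoe : ∀ (h : lfixF (q:M) * (i : M) * rfixF (q:M) = (q:M)) , (i : M) = (q : M) := by
        intro h
        have hle : leJ (q : M) (i : M) := ⟨lfixF (q:M), rfixF (q:M), h.symm⟩
        by_contra hne
        have := jHeight_strict hJ hle (fun hh => hne hh.symm)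
        omega
      by_cases hiq : i = q
      · subst hiq
        rw [if_pos, if_neg, if_pos rfl]
        · simp
        · intro h
          have hle : leJ (i : M) (omegaPow (i : M)) := ⟨lfixF (i:M), rfixF (i:M), h.symm⟩
          have heq : omegaPow (i : M) = (i : M) :=
            hJ.antisymm (leJ_omegaPow hJ (i : M)) hle
          exact hqQ.1 (heq ▸ omegaPow_idem hJ (i : M))
        · rw [show lfixF (i:M) * (i:M) = (i:M) from lfixF_fix hJ (i:M)]
          exact rfixF_fix hJ (i : M)
      · have hc1 : ¬ (lfixF (q:M) * (i:M) * rfixF (q:M) = (q:M)) :=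
          fun h => hiq (Subtype.ext (hcoe h))
        have hc2 : ¬ (lfixF (q:M) * omegaPow (i:M) * rfixF (q:M) = (q:M)) := by
          intro h
          have hle : leJ (q : M) (omegaPow (i : M)) := ⟨lfixF (q:M), rfixF (q:M), h.symm⟩
          have hle2 : leJ (q : M) (i : M) := leJ_trans hle (leJ_omegaPow hJ (i : M))
          have := jHeight_strict hJ hle2 (fun hh => hiq (Subtype.ext hh.symm))
          omega
        rw [if_neg hc1, if_neg hc2, if_neg hiq, sub_self, smul_eq_mul, mul_zero]
  rw [Finset.sum_congr rfl hterm, Finset.sum_ite_eq' s q g, if_pos hqs] at h0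
  exact hgq h0

theorem pi_diff_mem (hJ : JTrivial M) (x : M) : (NK K (M := M) * NK K (M := M)).mkQ (diffElt K x) ∈
    span K (Set.range (fun i : (quiverSet M : Set M) =>
      (NK K (M := M) * NK K (M := M)).mkQ (diffElt K (i : M)))) := by
  suffices h : ∀ n, ∀ y : M, jHeight y ≤ n → (NK K (M := M) * NK K (M := M)).mkQ (diffElt K y) ∈
      span K (Set.range (fun i : (quiverSet M : Set M) =>
        (NK K (M := M) * NK K (M := M)).mkQ (diffElt K (i : M)))) from h (jHeight x) x le_rfl
  intro n
  induction n with
  | zero =>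
    intro y hy
    exact absurd (jHeight_pos y) (by omega)
  | succ n ih =>
    intro y hy
    by_cases hid : IsIdempotentElem y
    · rw [diff_idem K hJ hid, map_zero]; exact zero_mem _
    by_cases hyq : y ∈ quiverSet M
    · exact Submodule.subset_span ⟨⟨y, hyq⟩, rfl⟩
    · obtain ⟨u, v, huv, ⟨h1le, h1ne⟩, ⟨h2le, h2ne⟩, ⟨h3le, h3ne⟩⟩ :=
        not_quiver_factor hJ hid hyq
      have hexp : diffElt K y = diffElt K u * diffElt K v
          + diffElt K (u * omegaPow v) + diffElt K (omegaPow u * v)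
          - diffElt K (omegaPow u * omegaPow v) := by
        rw [huv, diff_mul_diff]
        simp only [diffElt]
        rw [← omega_mul_right hJ u v, ← omega_mul_left hJ u v, ← omega_mul_both hJ u v]
        abel
      rw [hexp, map_sub, map_add, map_add]
      have hz : (NK K (M := M) * NK K (M := M)).mkQ (diffElt K u * diffElt K v) = 0 := by
        rw [Submodule.mkQ_apply, Submodule.Quotient.mk_eq_zero]
        exact Submodule.mul_mem_mul (diffElt_mem_NK K u) (diffElt_mem_NK K v)
      rw [hz, zero_add]
      have e1 : jHeight (u * omegaPow v) ≤ n := by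
        have := jHeight_strict hJ h1le h1ne; omega
      have e2 : jHeight (omegaPow u * v) ≤ n := by
        have := jHeight_strict hJ h2le h2ne; omega
      have e3 : jHeight (omegaPow u * omegaPow v) ≤ n := by
        have := jHeight_strict hJ h3le h3ne; omega
      exact sub_mem (add_mem (ih _ e1) (ih _ e2)) (ih _ e3)

theorem main_span (hJ : JTrivial M) :
    span K (Set.range (fun x : (quiverSet M : Set M) =>
      (NK K (M := M) * NK K (M := M)).mkQ (diffElt K (x : M))))
    = Submodule.map (NK K (M := M) * NK K (M := M)).mkQ (NK K) := by
  apply le_antisymm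
  · rw [Submodule.span_le]
    rintro _ ⟨i, rfl⟩
    exact ⟨diffElt K (i : M), diffElt_mem_NK K _, rfl⟩
  · have hms : Submodule.map (NK K (M := M) * NK K (M := M)).mkQ (NK K (M := M))
        = span K ((NK K (M := M) * NK K (M := M)).mkQ ''
            (Set.range fun x : M => diffElt K x)) :=
      Submodule.map_span _ _
    rw [hms, Submodule.span_le]
    rintro _ ⟨_, ⟨x, rfl⟩, rfl⟩
    dsimp only
    exact pi_diff_mem K hJ x

theorem main_rank (hJ : JTrivial M) :
    Module.finrank K (Submodule.map (NK K (M := M) * NK K (M := M)).mkQ (NK K)) = Nat.card (quiverSet M) := by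
  haveI : Fintype (quiverSet M : Set M) := Fintype.ofFinite _
  rw [← main_span K hJ, finrank_span_eq_card (main_indep K hJ)]
  exact (Nat.card_eq_fintype_card).symm

end PartE

/-- Let `R` be the Jacobson radical of `K[M]` (regarded as a `K`-subspace) and `R²` its
square.  The images of the elements `x - x^ω`, for `x ∈ Q(M)`, form a `K`-basis of `R/R²`;
in particular `dim_K R/R² = |Q(M)|`. -/
theorem radical_quotient_basis (K : Type*) [Field K] {M : Type*} [Monoid M] [Fintype M]
    (hJ : JTrivial M) :
    LinearIndependent K
      (fun x : quiverSet M =>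
        (Submodule.restrictScalars K (Ideal.jacobson (⊥ : Ideal (MonoidAlgebra K M))) *
          Submodule.restrictScalars K (Ideal.jacobson (⊥ : Ideal (MonoidAlgebra K M)))).mkQ
          (MonoidAlgebra.of K M (x : M) - MonoidAlgebra.of K M (omegaPow (x : M)))) ∧
    Submodule.span K
      (Set.range (fun x : quiverSet M =>
        (Submodule.restrictScalars K (Ideal.jacobson (⊥ : Ideal (MonoidAlgebra K M))) *
          Submodule.restrictScalars K (Ideal.jacobson (⊥ : Ideal (MonoidAlgebra K M)))).mkQ
          (MonoidAlgebra.of K M (x : M) - MonoidAlgebra.of K M (omegaPow (x : M)))))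
      = Submodule.map
          (Submodule.restrictScalars K (Ideal.jacobson (⊥ : Ideal (MonoidAlgebra K M))) *
            Submodule.restrictScalars K (Ideal.jacobson (⊥ : Ideal (MonoidAlgebra K M)))).mkQ
          (Submodule.restrictScalars K (Ideal.jacobson (⊥ : Ideal (MonoidAlgebra K M)))) ∧
    Module.finrank K
      (Submodule.map
        (Submodule.restrictScalars K (Ideal.jacobson (⊥ : Ideal (MonoidAlgebra K M))) *
          Submodule.restrictScalars K (Ideal.jacobson (⊥ : Ideal (MonoidAlgebra K M)))).mkQ
        (Submodule.restrictScalars K (Ideal.jacobson (⊥ : Ideal (MonoidAlgebra K M)))))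
      = Nat.card (quiverSet M) := by
  rw [restrict_jacobson K hJ]
  exact ⟨main_indep K hJ, main_span K hJ, main_rank K hJ⟩
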